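/- For the nonautonomous linear saddle ẋ = f(t)x, ẏ = -f(t)y with f continuous and positive, the Lagrangian descriptor factors as M_p((x_0,y_0),t_0,τ) = |x_0|^p · A + |y_0|^p · B where A = ∫_{t_0-τ}^{t_0+τ} |e^{F(t)} f(t)|^p dt and B = ∫_{t_0-τ}^{t_0+τ} |e^{-F(t)} f(t)|^p dt are strictly positive constants independent of (x_0, y_0). Consequently, for p ∈ (0,1) and any y_0 ≠ 0, the map x_0 ↦ M_p((x_0,y_0),t_0,τ) is not differentiable at x_0 = 0. -/

import Mathlib

open Real intervalIntegral Set Filter Topology MeasureTheory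

lemma not_diff_abs_rpow (p : ℝ) (hp0 : 0 < p) (hp1 : p < 1) :
    ¬ DifferentiableAt ℝ (fun x : ℝ => |x| ^ p) 0 := by
  intro h
  have hd := h.hasDerivAt
  rw [hasDerivAt_iff_tendsto_slope] at hd
  have h1 : Tendsto (slope (fun x : ℝ => |x| ^ p) 0) (𝓝[>] 0)
      (𝓝 (deriv (fun x : ℝ => |x| ^ p) 0)) :=
    hd.mono_left (nhdsWithin_mono _ (fun x hx => ne_of_gt hx))
  have h2 : Tendsto (fun x : ℝ => x ^ (p - 1)) (𝓝[>] (0:ℝ)) atTop := by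
    have h3 := (tendsto_rpow_atTop (by linarith : (0:ℝ) < 1 - p)).comp
      tendsto_inv_nhdsGT_zero
    refine h3.congr' ?_
    filter_upwards [self_mem_nhdsWithin] with x (hx : 0 < x)
    show x⁻¹ ^ (1 - p) = x ^ (p - 1)
    rw [Real.inv_rpow hx.le, ← Real.rpow_neg hx.le]
    ring_nf
  have h4 : Tendsto (slope (fun x : ℝ => |x| ^ p) 0) (𝓝[>] (0:ℝ)) atTop := by
    refine h2.congr' ?_
    filter_upwards [self_mem_nhdsWithin] with x (hx : 0 < x)
    rw [slope_def_field]
    simp only [abs_zero, Real.zero_rpow hp0.ne', abs_of_pos hx, sub_zero]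
    rw [eq_div_iff hx.ne', ← Real.rpow_add_one hx.ne', sub_add_cancel]
  exact not_tendsto_nhds_of_tendsto_atTop h4 _ h1

theorem Mp_nonautonomous_saddle_factorization (f : ℝ → ℝ) (t₀ τ p y₀ : ℝ)
    (hτ : 0 < τ) (hf : Continuous f)
    (hfpos : ∀ t ∈ Icc (t₀ - τ) (t₀ + τ), 0 < f t)
    (hp0 : 0 < p) (hp1 : p < 1) (hy₀ : y₀ ≠ 0) :
    (∀ x₀ : ℝ,
      (∫ t in (t₀ - τ)..(t₀ + τ),
          (|x₀ * Real.exp (∫ s in (0:ℝ)..t, f s) * f t| ^ p +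
           |y₀ * Real.exp (-(∫ s in (0:ℝ)..t, f s)) * f t| ^ p))
        = |x₀| ^ p * (∫ t in (t₀ - τ)..(t₀ + τ), |Real.exp (∫ s in (0:ℝ)..t, f s) * f t| ^ p)
          + |y₀| ^ p *
            (∫ t in (t₀ - τ)..(t₀ + τ), |Real.exp (-(∫ s in (0:ℝ)..t, f s)) * f t| ^ p)) ∧
    (0 < ∫ t in (t₀ - τ)..(t₀ + τ), |Real.exp (∫ s in (0:ℝ)..t, f s) * f t| ^ p) ∧
    (0 < ∫ t in (t₀ - τ)..(t₀ + τ), |Real.exp (-(∫ s in (0:ℝ)..t, f s)) * f t| ^ p) ∧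
    ¬ DifferentiableAt ℝ
        (fun x₀ : ℝ =>
          ∫ t in (t₀ - τ)..(t₀ + τ),
            (|x₀ * Real.exp (∫ s in (0:ℝ)..t, f s) * f t| ^ p +
             |y₀ * Real.exp (-(∫ s in (0:ℝ)..t, f s)) * f t| ^ p)) 0 := by
  set F : ℝ → ℝ := fun t => ∫ s in (0:ℝ)..t, f s with hF
  have hab : t₀ - τ < t₀ + τ := by linarith
  have hcF : Continuous F :=
    intervalIntegral.continuous_primitive (μ := volume) (fun a b => hf.intervalIntegrable a b) 0
  have habs : Continuous fun x : ℝ => |x| ^ p :=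
    continuous_abs.rpow_const (fun x => Or.inr hp0.le)
  have hg : Continuous fun t => |Real.exp (F t) * f t| ^ p :=
    habs.comp (((Real.continuous_exp.comp hcF).mul hf))
  have hh : Continuous fun t => |Real.exp (-(F t)) * f t| ^ p :=
    habs.comp (((Real.continuous_exp.comp hcF.neg).mul hf))
  have hgi : IntervalIntegrable (fun t => |Real.exp (F t) * f t| ^ p) volume (t₀ - τ) (t₀ + τ) :=
    hg.intervalIntegrable _ _
  have hhi : IntervalIntegrable (fun t => |Real.exp (-(F t)) * f t| ^ p) volume (t₀ - τ) (t₀ + τ) :=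
    hh.intervalIntegrable _ _
  have key : ∀ x₀ : ℝ,
      (∫ t in (t₀ - τ)..(t₀ + τ),
          (|x₀ * Real.exp (F t) * f t| ^ p + |y₀ * Real.exp (-(F t)) * f t| ^ p))
        = |x₀| ^ p * (∫ t in (t₀ - τ)..(t₀ + τ), |Real.exp (F t) * f t| ^ p)
          + |y₀| ^ p * (∫ t in (t₀ - τ)..(t₀ + τ), |Real.exp (-(F t)) * f t| ^ p) := by
    intro x₀
    have e1 : ∀ t, |x₀ * Real.exp (F t) * f t| ^ p
        = |x₀| ^ p * |Real.exp (F t) * f t| ^ p := by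
      intro t
      rw [mul_assoc, abs_mul, Real.mul_rpow (abs_nonneg _) (abs_nonneg _)]
    have e2 : ∀ t, |y₀ * Real.exp (-(F t)) * f t| ^ p
        = |y₀| ^ p * |Real.exp (-(F t)) * f t| ^ p := by
      intro t
      rw [mul_assoc, abs_mul, Real.mul_rpow (abs_nonneg _) (abs_nonneg _)]
    simp only [e1, e2]
    rw [intervalIntegral.integral_add (hgi.const_mul _) (hhi.const_mul _),
      intervalIntegral.integral_const_mul, intervalIntegral.integral_const_mul]
  have posA : 0 < ∫ t in (t₀ - τ)..(t₀ + τ), |Real.exp (F t) * f t| ^ p := by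
    apply intervalIntegral.intervalIntegral_pos_of_pos_on hgi _ hab
    intro x hx
    have hfx := hfpos x (Ioo_subset_Icc_self hx)
    exact Real.rpow_pos_of_pos (abs_pos.mpr (mul_ne_zero (Real.exp_ne_zero _) hfx.ne')) p
  have posB : 0 < ∫ t in (t₀ - τ)..(t₀ + τ), |Real.exp (-(F t)) * f t| ^ p := by
    apply intervalIntegral.intervalIntegral_pos_of_pos_on hhi _ hab
    intro x hx
    have hfx := hfpos x (Ioo_subset_Icc_self hx)
    exact Real.rpow_pos_of_pos (abs_pos.mpr (mul_ne_zero (Real.exp_ne_zero _) hfx.ne')) p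
  refine ⟨key, posA, posB, ?_⟩
  intro hdiff
  set A := ∫ t in (t₀ - τ)..(t₀ + τ), |Real.exp (F t) * f t| ^ p with hA
  set B := ∫ t in (t₀ - τ)..(t₀ + τ), |Real.exp (-(F t)) * f t| ^ p with hB
  have hfun : (fun x₀ : ℝ =>
      ∫ t in (t₀ - τ)..(t₀ + τ),
        (|x₀ * Real.exp (F t) * f t| ^ p + |y₀ * Real.exp (-(F t)) * f t| ^ p))
      = fun x₀ : ℝ => |x₀| ^ p * A + |y₀| ^ p * B := funext key
  rw [hfun] at hdiff
  have hd2 : DifferentiableAt ℝ (fun x : ℝ => (|x| ^ p * A + |y₀| ^ p * B - |y₀| ^ p * B) * A⁻¹) 0 :=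
    (hdiff.sub_const _).mul_const _
  have heq : (fun x : ℝ => (|x| ^ p * A + |y₀| ^ p * B - |y₀| ^ p * B) * A⁻¹)
      = fun x : ℝ => |x| ^ p := by
    funext x
    field_simp
    ring
  rw [heq] at hd2
  exact not_diff_abs_rpow p hp0 hp1 hd2
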